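/- arXiv:2112.02440 — 2 statements merged into one kernel-verified Lean document; each statement's English description precedes it below -/
import Mathlib

section
/- Let η > 0, θ ≥ 0, α ∈ (1,2), b ∈ ℝ, σ ∈ ℝ, and define the tempered α-stable branching mechanism Φ(x) = −bx + (1/2)(σx)² + ∫₀^∞ (e^{xz} − 1 − xz) π(dz), where π(dz) = (1/Γ(−α)) η^α e^{−(θ/η)z} z^{−1−α} dz on (0,∞). Then for all x ≤ θ/η, Φ(x) = −bx + (1/2)σ²x² + (θ − ηx)^α − θ^α + α θ^{α−1} η x. -/
open MeasureTheory Real Set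

open Filter

lemma aux_exp_quad (z : ℝ) (hz0 : 0 ≤ z) : Real.exp (-z) - 1 + z ≤ z^2/2 := by
  have hmono : Monotone (fun z : ℝ => z^2/2 - z + 1 - Real.exp (-z)) := by
    have hd : ∀ x : ℝ, HasDerivAt (fun z : ℝ => z^2/2 - z + 1 - Real.exp (-z))
        (x - 1 + Real.exp (-x)) x := by
      intro x
      have h1 : HasDerivAt (fun z : ℝ => Real.exp (-z)) (-Real.exp (-x)) x := by
        simpa using (hasDerivAt_neg x).exp
      have h2 : HasDerivAt (fun z : ℝ => z^2/2 - z + 1) (x - 1) x := by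
        have := ((hasDerivAt_pow 2 x).div_const 2).sub (hasDerivAt_id x)
        simpa using this.add_const 1
      exact (h2.sub h1).congr_deriv (by ring)
    apply monotone_of_deriv_nonneg
    · exact fun x => (hd x).differentiableAt
    · intro x
      rw [(hd x).deriv]
      nlinarith [Real.add_one_le_exp (-x)]
  have h0 : (fun z : ℝ => z^2/2 - z + 1 - Real.exp (-z)) 0 = 0 := by simp
  have := hmono hz0; rw [h0] at this; simp at this; linarith

lemma aux_exp_nonneg (z : ℝ) : 0 ≤ Real.exp (-z) - 1 + z := by
  nlinarith [Real.add_one_le_exp (-z)]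

lemma aux_exp_le_one {z : ℝ} (hz : 0 ≤ z) : Real.exp (-z) ≤ 1 := by
  simpa using Real.exp_le_exp.mpr (neg_nonpos.mpr hz)

lemma aux_exp_lin {z : ℝ} (hz : 0 ≤ z) : Real.exp (-z) - 1 + z ≤ z := by
  nlinarith [aux_exp_le_one hz]

lemma aux_one_sub_nonneg {z : ℝ} (hz : 0 ≤ z) : 0 ≤ 1 - Real.exp (-z) := by
  nlinarith [aux_exp_le_one hz]

lemma aux_one_sub_le_lin (z : ℝ) : 1 - Real.exp (-z) ≤ z := by
  nlinarith [Real.add_one_le_exp (-z)]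

lemma aux_one_sub_le_one (z : ℝ) : 1 - Real.exp (-z) ≤ 1 := by
  nlinarith [Real.exp_pos (-z)]

lemma contOn_rpow (p : ℝ) : ContinuousOn (fun z : ℝ => z ^ p) (Ioi 0) :=
  fun x hx => (Real.continuousAt_rpow_const x p (Or.inl (ne_of_gt hx))).continuousWithinAt

lemma integrableOn_of_bounds {f : ℝ → ℝ} (hm : ContinuousOn f (Ioi 0))
    {C1 C2 p q : ℝ} (hp : -1 < p) (hq : q < -1)
    (h1 : ∀ z ∈ Ioc (0:ℝ) 1, |f z| ≤ C1 * z ^ p)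
    (h2 : ∀ z ∈ Ioi (1:ℝ), |f z| ≤ C2 * z ^ q) :
    IntegrableOn f (Ioi 0) := by
  have hsplit : Ioi (0:ℝ) = Ioc 0 1 ∪ Ioi 1 := (Ioc_union_Ioi_eq_Ioi (by norm_num)).symm
  rw [hsplit]
  apply IntegrableOn.union
  · have hg : IntegrableOn (fun z : ℝ => C1 * z ^ p) (Ioc (0:ℝ) 1) := by
      apply Integrable.const_mul
      have := intervalIntegral.intervalIntegrable_rpow' (a := (0:ℝ)) (b := 1) hp
      rwa [intervalIntegrable_iff_integrableOn_Ioc_of_le (by norm_num)] at this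
    refine Integrable.mono hg ?_ ?_
    · exact (hm.mono (fun x hx => hx.1)).aestronglyMeasurable measurableSet_Ioc
    · rw [ae_restrict_iff' measurableSet_Ioc]
      filter_upwards with z hz
      rw [norm_eq_abs, norm_eq_abs]
      exact (h1 z hz).trans (le_abs_self _)
  · have hg : IntegrableOn (fun z : ℝ => C2 * z ^ q) (Ioi (1:ℝ)) :=
      (integrableOn_Ioi_rpow_of_lt hq one_pos).const_mul _
    refine Integrable.mono hg ?_ ?_
    · exact (hm.mono (fun x (hx : x ∈ Ioi (1:ℝ)) => lt_trans one_pos (mem_Ioi.mp hx))).aestronglyMeasurable measurableSet_Ioi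
    · rw [ae_restrict_iff' measurableSet_Ioi]
      filter_upwards with z hz
      rw [norm_eq_abs, norm_eq_abs]
      exact (h2 z hz).trans (le_abs_self _)

lemma rpow_merge {z : ℝ} (hz : 0 < z) (a b : ℝ) : z ^ a * z ^ b = z ^ (a + b) :=
  (Real.rpow_add hz a b).symm

lemma rpow_shift1 {z : ℝ} (hz0 : 0 < z) (a : ℝ) : z * z ^ a = z ^ (1 + a) := by
  have := (Real.rpow_add hz0 1 a).symm
  rwa [Real.rpow_one] at this

lemma rpow_shift2 {z : ℝ} (hz0 : 0 < z) (a : ℝ) : z ^ 2 * z ^ a = z ^ (2 + a) := by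
  have := (Real.rpow_add hz0 2 a).symm
  rwa [show ((2:ℝ)) = ((2:ℕ):ℝ) by norm_num, Real.rpow_natCast] at this

lemma intA {α : ℝ} (hα1 : 1 < α) (hα2 : α < 2) {u : ℝ} (hu : 0 ≤ u) :
    IntegrableOn (fun z : ℝ => (Real.exp (-(u*z)) - 1 + u*z) * z ^ (-1-α)) (Ioi 0) := by
  apply integrableOn_of_bounds (C1 := u^2/2) (C2 := u) (p := 1-α) (q := -α)
    (hp := by linarith) (hq := by linarith)
  case hm =>
    exact Continuous.continuousOn (by fun_prop) |>.mul (contOn_rpow _)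
  case h1 =>
    intro z hz
    have hz0 : 0 < z := hz.1
    have huz : 0 ≤ u * z := mul_nonneg hu hz0.le
    have hr : 0 < z ^ (-1-α) := Real.rpow_pos_of_pos hz0 _
    rw [abs_of_nonneg (mul_nonneg (aux_exp_nonneg _) hr.le)]
    have hb : Real.exp (-(u*z)) - 1 + u*z ≤ u^2/2 * z^2 := by
      have := aux_exp_quad (u*z) huz; nlinarith
    calc (Real.exp (-(u*z)) - 1 + u*z) * z ^ (-1-α)
        ≤ (u^2/2 * z^2) * z ^ (-1-α) := by nlinarith
      _ = u^2/2 * z ^ (1-α) := by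
          rw [mul_assoc, rpow_shift2 hz0, show (2:ℝ)+(-1-α) = 1-α by ring]
  case h2 =>
    intro z hz
    have hz0 : 0 < z := lt_trans one_pos hz
    have huz : 0 ≤ u * z := mul_nonneg hu hz0.le
    have hr : 0 < z ^ (-1-α) := Real.rpow_pos_of_pos hz0 _
    rw [abs_of_nonneg (mul_nonneg (aux_exp_nonneg _) hr.le)]
    calc (Real.exp (-(u*z)) - 1 + u*z) * z ^ (-1-α)
        ≤ (u * z) * z ^ (-1-α) := by nlinarith [aux_exp_lin huz]
      _ = u * z ^ (-α) := by
          rw [mul_assoc, rpow_shift1 hz0, show (1:ℝ)+(-1-α) = -α by ring]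

lemma intC {α : ℝ} (hα1 : 1 < α) (hα2 : α < 2) {c : ℝ} (hc : 0 ≤ c) :
    IntegrableOn (fun z : ℝ => (1 - Real.exp (-(c*z))) * z ^ (-α)) (Ioi 0) := by
  apply integrableOn_of_bounds (C1 := c) (C2 := 1) (p := 1-α) (q := -α)
    (hp := by linarith) (hq := by linarith)
  case hm =>
    exact Continuous.continuousOn (by fun_prop) |>.mul (contOn_rpow _)
  case h1 =>
    intro z hz
    have hz0 : 0 < z := hz.1
    have huz : 0 ≤ c * z := mul_nonneg hc hz0.le
    have hr : 0 < z ^ (-α) := Real.rpow_pos_of_pos hz0 _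
    rw [abs_of_nonneg (mul_nonneg (aux_one_sub_nonneg huz) hr.le)]
    calc (1 - Real.exp (-(c*z))) * z ^ (-α)
        ≤ (c * z) * z ^ (-α) := by nlinarith [aux_one_sub_le_lin (c*z)]
      _ = c * z ^ (1-α) := by
          rw [mul_assoc, rpow_shift1 hz0, show (1:ℝ)+(-α) = 1-α by ring]
  case h2 =>
    intro z hz
    have hz0 : 0 < z := lt_trans one_pos hz
    have huz : 0 ≤ c * z := mul_nonneg hc hz0.le
    have hr : 0 < z ^ (-α) := Real.rpow_pos_of_pos hz0 _
    rw [abs_of_nonneg (mul_nonneg (aux_one_sub_nonneg huz) hr.le)]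
    nlinarith [aux_one_sub_le_one (c*z)]

lemma intG {α : ℝ} (hα2 : α < 2) :
    IntegrableOn (fun z : ℝ => Real.exp (-z) * z ^ (1-α)) (Ioi 0) := by
  have := Real.GammaIntegral_convergent (s := 2-α) (by linarith)
  convert this using 2 with z
  ring_nf

lemma tendsto_const_rpow_zero {p : ℝ} (C : ℝ) (hp : 0 < p) :
    Tendsto (fun z : ℝ => C * z ^ p) (nhdsWithin 0 (Ioi 0)) (nhds 0) := by
  have h := (Real.continuousAt_rpow_const 0 p (Or.inr hp.le)).tendsto
  rw [Real.zero_rpow (ne_of_gt hp)] at h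
  simpa using (h.const_mul C).mono_left nhdsWithin_le_nhds

lemma tendsto_const_rpow_atTop {p : ℝ} (C : ℝ) (hp : p < 0) :
    Tendsto (fun z : ℝ => C * z ^ p) atTop (nhds 0) := by
  have h := tendsto_rpow_neg_atTop (y := -p) (by linarith)
  rw [neg_neg] at h
  simpa using h.const_mul C

lemma T1 {α : ℝ} (hα1 : 1 < α) (hα2 : α < 2) :
    Tendsto (fun z : ℝ => (Real.exp (-z) - 1 + z) * (z ^ (-α) / (-α)))
      (nhdsWithin 0 (Ioi 0)) (nhds 0) := by
  have hαpos : (0:ℝ) < α := by linarith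
  apply squeeze_zero_norm' (a := fun z : ℝ => 1/(2*α) * z ^ (2-α))
  · filter_upwards [self_mem_nhdsWithin] with z hz
    have hz0 : 0 < z := hz
    have hr : 0 < z ^ (-α) := Real.rpow_pos_of_pos hz0 _
    rw [norm_eq_abs, abs_mul, abs_of_nonneg (aux_exp_nonneg z), abs_div, abs_neg,
      abs_of_pos hr, abs_of_pos hαpos]
    calc (Real.exp (-z) - 1 + z) * (z ^ (-α) / α)
        ≤ (z^2/2) * (z ^ (-α) / α) :=
          mul_le_mul_of_nonneg_right (aux_exp_quad z hz0.le) (by positivity)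
      _ = 1/(2*α) * (z^2 * z ^ (-α)) := by ring
      _ = 1/(2*α) * z ^ (2-α) := by rw [rpow_shift2 hz0, show (2:ℝ)+(-α) = 2-α by ring]
  · exact tendsto_const_rpow_zero _ (by linarith)

lemma T2 {α : ℝ} (hα1 : 1 < α) :
    Tendsto (fun z : ℝ => (Real.exp (-z) - 1 + z) * (z ^ (-α) / (-α))) atTop (nhds 0) := by
  have hαpos : (0:ℝ) < α := by linarith
  apply squeeze_zero_norm' (a := fun z : ℝ => 1/α * z ^ (1-α))
  · filter_upwards [eventually_gt_atTop 0] with z hz0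
    have hr : 0 < z ^ (-α) := Real.rpow_pos_of_pos hz0 _
    rw [norm_eq_abs, abs_mul, abs_of_nonneg (aux_exp_nonneg z), abs_div, abs_neg,
      abs_of_pos hr, abs_of_pos hαpos]
    calc (Real.exp (-z) - 1 + z) * (z ^ (-α) / α)
        ≤ z * (z ^ (-α) / α) :=
          mul_le_mul_of_nonneg_right (aux_exp_lin hz0.le) (by positivity)
      _ = 1/α * (z * z ^ (-α)) := by ring
      _ = 1/α * z ^ (1-α) := by rw [rpow_shift1 hz0, show (1:ℝ)+(-α) = 1-α by ring]
  · exact tendsto_const_rpow_atTop _ (by linarith)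

lemma T3 {α : ℝ} (hα1 : 1 < α) (hα2 : α < 2) :
    Tendsto (fun z : ℝ => (1 - Real.exp (-z)) * (z ^ (1-α) / (1-α)))
      (nhdsWithin 0 (Ioi 0)) (nhds 0) := by
  apply squeeze_zero_norm' (a := fun z : ℝ => 1/(α-1) * z ^ (2-α))
  · filter_upwards [self_mem_nhdsWithin] with z hz
    have hz0 : 0 < z := hz
    have hr : 0 < z ^ (1-α) := Real.rpow_pos_of_pos hz0 _
    rw [norm_eq_abs, abs_mul, abs_of_nonneg (aux_one_sub_nonneg hz0.le), abs_div,
      abs_of_pos hr, abs_of_neg (by linarith : (1:ℝ)-α < 0), neg_sub]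
    calc (1 - Real.exp (-z)) * (z ^ (1-α) / (α-1))
        ≤ z * (z ^ (1-α) / (α-1)) :=
          mul_le_mul_of_nonneg_right (aux_one_sub_le_lin z) (div_nonneg hr.le (by linarith))
      _ = 1/(α-1) * (z * z ^ (1-α)) := by ring
      _ = 1/(α-1) * z ^ (2-α) := by rw [rpow_shift1 hz0, show (1:ℝ)+(1-α) = 2-α by ring]
  · exact tendsto_const_rpow_zero _ (by linarith)

lemma T4 {α : ℝ} (hα1 : 1 < α) :
    Tendsto (fun z : ℝ => (1 - Real.exp (-z)) * (z ^ (1-α) / (1-α))) atTop (nhds 0) := by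
  apply squeeze_zero_norm' (a := fun z : ℝ => 1/(α-1) * z ^ (1-α))
  · filter_upwards [eventually_gt_atTop 0] with z hz0
    have hr : 0 < z ^ (1-α) := Real.rpow_pos_of_pos hz0 _
    rw [norm_eq_abs, abs_mul, abs_of_nonneg (aux_one_sub_nonneg hz0.le), abs_div,
      abs_of_pos hr, abs_of_neg (by linarith : (1:ℝ)-α < 0), neg_sub]
    calc (1 - Real.exp (-z)) * (z ^ (1-α) / (α-1))
        ≤ 1 * (z ^ (1-α) / (α-1)) :=
          mul_le_mul_of_nonneg_right (aux_one_sub_le_one z) (div_nonneg hr.le (by linarith))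
      _ = 1/(α-1) * z ^ (1-α) := by ring
  · exact tendsto_const_rpow_atTop _ (by linarith)

lemma intJ {α : ℝ} (hα1 : 1 < α) (hα2 : α < 2) :
    ∫ z in Ioi (0:ℝ), (1 - Real.exp (-z)) * z ^ (-α) = Real.Gamma (2-α) / (α-1) := by
  have h1ne : (1:ℝ) - α ≠ 0 := by linarith
  have hu : ∀ x ∈ Ioi (0:ℝ), HasDerivAt (fun z : ℝ => 1 - Real.exp (-z)) (Real.exp (-x)) x := by
    intro x _
    have h : HasDerivAt (fun z : ℝ => Real.exp (-z)) (-Real.exp (-x)) x := by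
      simpa using (hasDerivAt_neg x).exp
    exact ((hasDerivAt_const x (1:ℝ)).sub h).congr_deriv (by ring)
  have hv : ∀ x ∈ Ioi (0:ℝ), HasDerivAt (fun z : ℝ => z ^ (1-α) / (1-α)) (x ^ (-α)) x := by
    intro x hx
    have h := (Real.hasDerivAt_rpow_const (p := 1-α)
      (Or.inl (ne_of_gt (mem_Ioi.mp hx)))).div_const (1-α)
    refine h.congr_deriv ?_
    rw [show (1:ℝ)-α-1 = -α by ring]
    field_simp
  have huv' : IntegrableOn
      ((fun z : ℝ => 1 - Real.exp (-z)) * fun z : ℝ => z ^ (-α)) (Ioi 0) := by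
    simpa [Pi.mul_def, one_mul] using (intC (c := 1) hα1 hα2 zero_le_one)
  have hu'v : IntegrableOn
      ((fun z : ℝ => Real.exp (-z)) * fun z : ℝ => z ^ (1-α) / (1-α)) (Ioi 0) := by
    have := (intG (α := α) hα2).div_const (1-α)
    simp only [mul_div_assoc] at this
    exact this
  have key := integral_Ioi_mul_deriv_eq_deriv_mul hu hv huv' hu'v (T3 hα1 hα2) (T4 hα1)
  rw [key]
  have hg : ∫ z in Ioi (0:ℝ), Real.exp (-z) * z ^ (1-α) = Real.Gamma (2-α) := by
    rw [Real.Gamma_eq_integral (by linarith : (0:ℝ) < 2-α)]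
    simp only [show (2:ℝ)-α-1 = 1-α from by ring]
  simp_rw [← mul_div_assoc]
  rw [integral_div, hg, show (1:ℝ)-α = -(α-1) by ring, div_neg]
  ring

lemma intK {α : ℝ} (hα1 : 1 < α) (hα2 : α < 2) :
    ∫ z in Ioi (0:ℝ), (Real.exp (-z) - 1 + z) * z ^ (-1-α)
      = Real.Gamma (2-α) / (α*(α-1)) := by
  have hαne : -α ≠ 0 := by intro h; nlinarith [neg_eq_zero.mp h]
  have hu : ∀ x ∈ Ioi (0:ℝ),
      HasDerivAt (fun z : ℝ => Real.exp (-z) - 1 + z) (1 - Real.exp (-x)) x := by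
    intro x _
    have h : HasDerivAt (fun z : ℝ => Real.exp (-z)) (-Real.exp (-x)) x := by
      simpa using (hasDerivAt_neg x).exp
    have := (h.sub_const 1).add (hasDerivAt_id x)
    refine this.congr_deriv ?_
    ring
  have hv : ∀ x ∈ Ioi (0:ℝ), HasDerivAt (fun z : ℝ => z ^ (-α) / (-α)) (x ^ (-1-α)) x := by
    intro x hx
    have h := (Real.hasDerivAt_rpow_const (p := -α)
      (Or.inl (ne_of_gt (mem_Ioi.mp hx)))).div_const (-α)
    refine h.congr_deriv ?_
    rw [show -α-(1:ℝ) = -1-α by ring]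
    field_simp
  have huv' : IntegrableOn
      ((fun z : ℝ => Real.exp (-z) - 1 + z) * fun z : ℝ => z ^ (-1-α)) (Ioi 0) := by
    simpa [Pi.mul_def, one_mul] using (intA (u := 1) hα1 hα2 zero_le_one)
  have hu'v : IntegrableOn
      ((fun z : ℝ => 1 - Real.exp (-z)) * fun z : ℝ => z ^ (-α) / (-α)) (Ioi 0) := by
    have := (intC (c := 1) hα1 hα2 zero_le_one).div_const (-α)
    simp only [one_mul, mul_div_assoc] at this
    exact this
  have key := integral_Ioi_mul_deriv_eq_deriv_mul hu hv huv' hu'v (T1 hα1 hα2) (T2 hα1)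
  rw [key]
  simp_rw [← mul_div_assoc]
  rw [integral_div, intJ hα1 hα2, div_div,
    show (α-1) * -α = -(α*(α-1)) by ring, div_neg]
  ring

lemma gamma_rel {α : ℝ} (hα1 : 1 < α) (hα2 : α < 2) :
    Real.Gamma (2-α) = α*(α-1) * Real.Gamma (-α) := by
  have h1 : (-α) ≠ 0 := by intro h; nlinarith [neg_eq_zero.mp h]
  have h2 : (1:ℝ) - α ≠ 0 := by intro h; nlinarith
  have e1 := Real.Gamma_add_one h1
  have e2 := Real.Gamma_add_one h2
  rw [show (2:ℝ)-α = 1-α+1 by ring, e2, show (1:ℝ)-α = -α+1 by ring, e1]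
  ring

lemma gamma_neg_pos {α : ℝ} (hα1 : 1 < α) (hα2 : α < 2) : 0 < Real.Gamma (-α) := by
  have hg : 0 < Real.Gamma (2-α) := Real.Gamma_pos_of_pos (by linarith)
  rw [gamma_rel hα1 hα2] at hg
  by_contra h
  push_neg at h
  nlinarith [mul_nonpos_of_nonneg_of_nonpos (show (0:ℝ) ≤ α*(α-1) by nlinarith) h]

lemma intA_eq {α : ℝ} (hα1 : 1 < α) (hα2 : α < 2) {u : ℝ} (hu : 0 ≤ u) :
    ∫ z in Ioi (0:ℝ), (Real.exp (-(u*z)) - 1 + u*z) * z ^ (-1-α)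
      = Real.Gamma (-α) * u ^ α := by
  rcases eq_or_lt_of_le hu with h | hu'
  · simp [← h, Real.zero_rpow (show α ≠ 0 by intro h'; nlinarith)]
  · have key := integral_comp_mul_left_Ioi
      (g := fun w : ℝ => (Real.exp (-w) - 1 + w) * w ^ (-1-α)) 0 hu'
    have hpow : u ^ (1+α) * u ^ (-1-α) = 1 := by
      rw [← Real.rpow_add hu', show (1+α) + (-1-α) = 0 by ring, Real.rpow_zero]
    have h1 : EqOn (fun z : ℝ => (Real.exp (-(u*z)) - 1 + u*z) * z ^ (-1-α))
        (fun z : ℝ => u ^ (1+α) *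
          ((Real.exp (-(u*z)) - 1 + u*z) * (u*z) ^ (-1-α))) (Ioi 0) := by
      intro z hz
      have hz0 : 0 < z := hz
      simp only
      rw [Real.mul_rpow hu'.le hz0.le]
      calc (Real.exp (-(u*z)) - 1 + u*z) * z ^ (-1-α)
          = (u ^ (1+α) * u ^ (-1-α)) * ((Real.exp (-(u*z)) - 1 + u*z) * z ^ (-1-α)) := by
            rw [hpow, one_mul]
        _ = u ^ (1+α) * ((Real.exp (-(u*z)) - 1 + u*z) * (u ^ (-1-α) * z ^ (-1-α))) := by
            ring
    rw [setIntegral_congr_fun measurableSet_Ioi h1, integral_const_mul, key]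
    rw [mul_zero] at key ⊢
    rw [intK hα1 hα2, gamma_rel hα1 hα2, smul_eq_mul]
    rw [show u ^ (1+α) * (u⁻¹ * (α*(α-1) * Real.Gamma (-α) / (α*(α-1))))
        = (u ^ (1+α) * u⁻¹) * (α*(α-1) * Real.Gamma (-α) / (α*(α-1))) by ring]
    rw [← Real.rpow_neg_one u, ← Real.rpow_add hu', show (1+α) + (-1) = α by ring]
    have hne : α*(α-1) ≠ 0 := (show (0:ℝ) < α*(α-1) by nlinarith).ne'
    have hne2 : α - 1 ≠ 0 := by intro h'; nlinarith
    field_simp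
  
lemma intC_eq {α : ℝ} (hα1 : 1 < α) (hα2 : α < 2) {c : ℝ} (hc : 0 ≤ c) :
    ∫ z in Ioi (0:ℝ), (1 - Real.exp (-(c*z))) * z ^ (-α)
      = α * Real.Gamma (-α) * c ^ (α-1) := by
  rcases eq_or_lt_of_le hc with h | hc'
  · simp [← h, Real.zero_rpow (show α - 1 ≠ 0 by intro h'; nlinarith)]
  · have key := integral_comp_mul_left_Ioi
      (g := fun w : ℝ => (1 - Real.exp (-w)) * w ^ (-α)) 0 hc'
    have hpow : c ^ α * c ^ (-α) = 1 := by
      rw [← Real.rpow_add hc', show α + (-α) = 0 by ring, Real.rpow_zero]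
    have h1 : EqOn (fun z : ℝ => (1 - Real.exp (-(c*z))) * z ^ (-α))
        (fun z : ℝ => c ^ α * ((1 - Real.exp (-(c*z))) * (c*z) ^ (-α))) (Ioi 0) := by
      intro z hz
      have hz0 : 0 < z := hz
      simp only
      rw [Real.mul_rpow hc'.le hz0.le]
      calc (1 - Real.exp (-(c*z))) * z ^ (-α)
          = (c ^ α * c ^ (-α)) * ((1 - Real.exp (-(c*z))) * z ^ (-α)) := by
            rw [hpow, one_mul]
        _ = c ^ α * ((1 - Real.exp (-(c*z))) * (c ^ (-α) * z ^ (-α))) := by ring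
    rw [setIntegral_congr_fun measurableSet_Ioi h1, integral_const_mul, key]
    rw [mul_zero] at key ⊢
    rw [intJ hα1 hα2, gamma_rel hα1 hα2, smul_eq_mul]
    rw [show c ^ α * (c⁻¹ * (α*(α-1) * Real.Gamma (-α) / (α-1)))
        = (c ^ α * c⁻¹) * (α*(α-1) * Real.Gamma (-α) / (α-1)) by ring]
    rw [← Real.rpow_neg_one c, ← Real.rpow_add hc', show α + (-1) = α - 1 by ring]
    rw [show α*(α-1) * Real.Gamma (-α) / (α-1) = α * Real.Gamma (-α) * ((α-1)/(α-1)) by ring,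
      div_self (show α - 1 ≠ 0 by intro h'; nlinarith)]
    ring


/-- Closed form of the tempered α-stable branching mechanism: for all x ≤ θ/η,
−bx + σ²x²/2 + ∫₀^∞ (e^{xz} − 1 − xz) (1/Γ(−α)) η^α e^{−(θ/η)z} z^{−1−α} dz
  = −bx + σ²x²/2 + (θ − ηx)^α − θ^α + αθ^{α−1}ηx. -/
theorem tempered_stable_branching_closed_form
    (η θ α b σ : ℝ) (hη : 0 < η) (hθ : 0 ≤ θ) (hα : α ∈ Set.Ioo (1:ℝ) 2) :
    ∀ x : ℝ, x ≤ θ / η →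
      -b * x + σ ^ 2 / 2 * x ^ 2 +
        ∫ z in Set.Ioi (0:ℝ),
          (Real.exp (x * z) - 1 - x * z) *
            ((1 / Real.Gamma (-α)) * η ^ α * Real.exp (-(θ / η) * z) * z ^ (-1 - α))
      = -b * x + σ ^ 2 / 2 * x ^ 2 + (θ - η * x) ^ α - θ ^ α + α * θ ^ (α - 1) * η * x := by
  intro x hx
  obtain ⟨hα1, hα2⟩ := hα
  set c : ℝ := θ / η with hcdef
  have hc : 0 ≤ c := div_nonneg hθ hη.le
  set u : ℝ := c - x with hudef
  have hu : 0 ≤ u := by rw [hudef]; exact sub_nonneg.mpr hx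
  have hΓ : Real.Gamma (-α) ≠ 0 := (gamma_neg_pos hα1 hα2).ne'
  have hpt : EqOn
      (fun z : ℝ => (Real.exp (x * z) - 1 - x * z) *
        ((1 / Real.Gamma (-α)) * η ^ α * Real.exp (-c * z) * z ^ (-1 - α)))
      (fun z : ℝ => (η ^ α / Real.Gamma (-α)) *
        ((Real.exp (-(u*z)) - 1 + u*z) * z ^ (-1-α)
          - (Real.exp (-(c*z)) - 1 + c*z) * z ^ (-1-α)
          + x * ((1 - Real.exp (-(c*z))) * z ^ (-α)))) (Ioi 0) := by
    intro z hz
    have hz0 : 0 < z := hz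
    simp only
    have hzα : z ^ (-α) = z * z ^ (-1-α) := by
      rw [rpow_shift1 hz0, show (1:ℝ) + (-1-α) = -α by ring]
    have hexp : Real.exp (-(u*z)) = Real.exp (x*z) * Real.exp (-c*z) := by
      rw [← Real.exp_add]; congr 1; rw [hudef]; ring
    rw [hzα, hexp]
    rw [hudef]
    ring
  have hAB : IntegrableOn (fun z : ℝ =>
      (Real.exp (-(u*z)) - 1 + u*z) * z ^ (-1-α)
        - (Real.exp (-(c*z)) - 1 + c*z) * z ^ (-1-α)) (Ioi 0) :=
    (intA hα1 hα2 hu).sub (intA hα1 hα2 hc)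
  have hxC : IntegrableOn (fun z : ℝ =>
      x * ((1 - Real.exp (-(c*z))) * z ^ (-α))) (Ioi 0) :=
    (intC hα1 hα2 hc).const_mul x
  rw [setIntegral_congr_fun measurableSet_Ioi hpt, integral_const_mul,
    integral_add hAB hxC,
    integral_sub (intA hα1 hα2 hu) (intA hα1 hα2 hc), integral_const_mul,
    intA_eq hα1 hα2 hu, intA_eq hα1 hα2 hc, intC_eq hα1 hα2 hc]
  have e1 : η ^ α * u ^ α = (θ - η*x) ^ α := by
    rw [← Real.mul_rpow hη.le hu]
    congr 1
    rw [hudef, hcdef]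
    field_simp
  have e2 : η ^ α * c ^ α = θ ^ α := by
    rw [← Real.mul_rpow hη.le hc]
    congr 1
    rw [hcdef]
    field_simp
  have e3 : η ^ α * c ^ (α-1) = η * θ ^ (α-1) := by
    have hs : η ^ α = η * η ^ (α-1) := by
      have h := Real.rpow_add hη 1 (α-1)
      rw [show (1:ℝ)+(α-1) = α by ring, Real.rpow_one] at h
      exact h
    rw [hs, mul_assoc, ← Real.mul_rpow hη.le hc]
    congr 2
    rw [hcdef]
    field_simp
  have expand : η ^ α / Real.Gamma (-α) *
      (Real.Gamma (-α) * u ^ α - Real.Gamma (-α) * c ^ α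
        + x * (α * Real.Gamma (-α) * c ^ (α-1)))
      = (Real.Gamma (-α) / Real.Gamma (-α)) *
        (η ^ α * u ^ α - η ^ α * c ^ α + x * α * (η ^ α * c ^ (α-1))) := by ring
  rw [expand, div_self hΓ, one_mul, e1, e2, e3]
  ring
end

section
/- Let f : ℝ → ℝ be integrable on [a,b] ⊂ ℝ with a < 0 < b, and consider the cosine-series coefficient B_k = (2/(b−a)) ∫₀^b (e^x − 1) cos(kπ(x−a)/(b−a)) dx for k ≥ 1. Then B_k = (2/(b−a)) [ (1/(1 + (kπ/(b−a))²)) ( (−1)^k e^b − cos(kπa/(b−a)) + (kπ/(b−a)) sin(kπa/(b−a)) ) − ((b−a)/(kπ)) sin(kπa/(b−a)) ]. -/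
set_option maxHeartbeats 1000000


open Real MeasureTheory intervalIntegral

/-- Closed-form evaluation of the COS-method payoff coefficients for a European call:
for a < 0 < b and k ≥ 1,
B_k = (2/(b−a)) ∫₀^b (e^x − 1) cos(kπ(x−a)/(b−a)) dx equals the stated closed form. -/
theorem cos_method_call_coefficients
    (a b : ℝ) (ha : a < 0) (hb : 0 < b)
    (f : ℝ → ℝ) (hf : IntegrableOn f (Set.Icc a b)) :
    ∀ k : ℕ, 1 ≤ k →
      (2 / (b - a)) * ∫ x in (0:ℝ)..b,
          (Real.exp x - 1) * Real.cos ((k : ℝ) * Real.pi * (x - a) / (b - a))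
        = (2 / (b - a)) *
            ((1 / (1 + ((k : ℝ) * Real.pi / (b - a)) ^ 2)) *
              ((-1 : ℝ) ^ k * Real.exp b - Real.cos ((k : ℝ) * Real.pi * a / (b - a))
                + ((k : ℝ) * Real.pi / (b - a)) * Real.sin ((k : ℝ) * Real.pi * a / (b - a)))
              - ((b - a) / ((k : ℝ) * Real.pi)) * Real.sin ((k : ℝ) * Real.pi * a / (b - a))) := by
  intro k hk
  have hba : (0:ℝ) < b - a := by linarith
  have hba' : b - a ≠ 0 := ne_of_gt hba
  have hkpos : (0:ℝ) < (k:ℝ) := by exact_mod_cast Nat.lt_of_lt_of_le Nat.zero_lt_one hk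
  have hpi := Real.pi_pos
  set ω : ℝ := (k:ℝ) * Real.pi / (b - a) with hω
  have hωpos : 0 < ω := by positivity
  have hω0 : ω ≠ 0 := ne_of_gt hωpos
  have hω1 : (1 + ω^2) ≠ 0 := by positivity
  have hkpi : (k:ℝ) * Real.pi ≠ 0 := by positivity
  -- rewrite the integrand phase
  have hphase : ∀ x : ℝ, (k : ℝ) * Real.pi * (x - a) / (b - a) = ω * (x - a) := by
    intro x; rw [hω]; ring
  -- antiderivative
  have key : ∀ x : ℝ, HasDerivAt
      (fun x => Real.exp x * (Real.cos (ω*(x-a)) + ω * Real.sin (ω*(x-a))) / (1+ω^2)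
        - Real.sin (ω*(x-a)) / ω)
      ((Real.exp x - 1) * Real.cos (ω*(x-a))) x := by
    intro x
    have hu : HasDerivAt (fun x => ω*(x-a)) ω x := by
      simpa using ((hasDerivAt_id x).sub_const a).const_mul ω
    have hcos := (Real.hasDerivAt_cos (ω*(x-a))).comp x hu
    have hsin := (Real.hasDerivAt_sin (ω*(x-a))).comp x hu
    have hexp := Real.hasDerivAt_exp x
    have h1 := ((hexp.mul (hcos.add (hsin.const_mul ω))).div_const (1+ω^2)).sub
      (hsin.div_const ω)
    refine h1.congr_deriv ?_
    simp only [Pi.add_apply, Function.comp_apply]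
    field_simp
    ring
  have hcont : Continuous fun x => (Real.exp x - 1) * Real.cos (ω*(x-a)) := by
    continuity
  have hint : (∫ x in (0:ℝ)..b, (Real.exp x - 1) * Real.cos (ω*(x-a)))
      = (Real.exp b * (Real.cos (ω*(b-a)) + ω * Real.sin (ω*(b-a))) / (1+ω^2)
          - Real.sin (ω*(b-a)) / ω)
        - (Real.exp 0 * (Real.cos (ω*(0-a)) + ω * Real.sin (ω*(0-a))) / (1+ω^2)
          - Real.sin (ω*(0-a)) / ω) := by
    exact intervalIntegral.integral_eq_sub_of_hasDerivAt (fun x _ => key x)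
      (hcont.intervalIntegrable 0 b)
  have hwb : ω * (b - a) = (k:ℝ) * Real.pi := by
    rw [hω]; field_simp
  have hw0 : ω * (0 - a) = -((k:ℝ) * Real.pi * a / (b - a)) := by
    rw [hω]; ring
  have hcoskpi : Real.cos ((k:ℝ) * Real.pi) = (-1:ℝ)^k := by
    simpa using Real.cos_nat_mul_pi_sub 0 k
  have hsinkpi : Real.sin ((k:ℝ) * Real.pi) = 0 := Real.sin_nat_mul_pi k
  simp only [hphase]
  rw [hint, hwb, hw0, hcoskpi, hsinkpi, Real.cos_neg, Real.sin_neg, Real.exp_zero]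
  rw [hω]
  field_simp
  ring
end
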